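/- Let c ≥ 0 and let Y : [0,T) → ℝⁿ be a C² vector-valued function with Y(0) = 0, Y(t) ≠ 0 for t ∈ (0,T), satisfying ⟨Y''(t), Y(t)⟩ ≥ c·|Y(t)|² for all t ∈ (0,T) (with respect to the standard inner product). Then t ↦ |Y(t)|/s_{−c}(t) is non-decreasing on (0,T), where s_{−c}(t) = sinh(√c t)/√c for c > 0 and s_0(t) = t. -/

import Mathlib

open Real MeasureTheory Set Filter Topology

/-- The comparison function `s_κ`: solution of `f'' + κ f = 0`, `f 0 = 0`, `f' 0 = 1`. -/
noncomputable def sk (κ t : ℝ) : ℝ :=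
  if 0 < κ then Real.sin (Real.sqrt κ * t) / Real.sqrt κ
  else if κ = 0 then t
  else Real.sinh (Real.sqrt (-κ) * t) / Real.sqrt (-κ)

lemma sk_neg_eq {c : ℝ} (hc : 0 ≤ c) (t : ℝ) :
    sk (-c) t = if c = 0 then t else Real.sinh (Real.sqrt c * t) / Real.sqrt c := by
  unfold sk
  rcases eq_or_lt_of_le hc with h | h
  · simp [← h]
  · have h1 : ¬ (0 < -c) := by linarith
    have h2 : ¬ (-c = 0) := by simpa using h.ne'
    rw [if_neg h1, if_neg h2, if_neg h.ne', neg_neg]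

lemma sk_zero {c : ℝ} (hc : 0 ≤ c) : sk (-c) 0 = 0 := by
  rw [sk_neg_eq hc]; split_ifs <;> simp

lemma sk_pos {c : ℝ} (hc : 0 ≤ c) {t : ℝ} (ht : 0 < t) : 0 < sk (-c) t := by
  rw [sk_neg_eq hc]
  split_ifs with h
  · exact ht
  · have hs : 0 < Real.sqrt c := Real.sqrt_pos.2 (lt_of_le_of_ne hc (Ne.symm h))
    exact div_pos (Real.sinh_pos_iff.2 (mul_pos hs ht)) hs

lemma sk_hasDerivAt {c : ℝ} (hc : 0 ≤ c) (t : ℝ) :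
    HasDerivAt (sk (-c)) (Real.cosh (Real.sqrt c * t)) t := by
  rcases eq_or_lt_of_le hc with h | h
  · have hf : sk (-c) = fun u => u := funext fun u => by rw [sk_neg_eq hc, if_pos h.symm]
    rw [hf, ← h]
    simpa using hasDerivAt_id' t
  · have hs : Real.sqrt c ≠ 0 := (Real.sqrt_pos.2 h).ne'
    have hf : sk (-c) = fun u => Real.sinh (Real.sqrt c * u) / Real.sqrt c :=
      funext fun u => by rw [sk_neg_eq hc, if_neg h.ne']
    rw [hf]
    have h1 : HasDerivAt (fun u : ℝ => Real.sqrt c * u) (Real.sqrt c) t := by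
      simpa using (hasDerivAt_id t).const_mul (Real.sqrt c)
    have h2 := (h1.sinh).div_const (Real.sqrt c)
    refine h2.congr_deriv ?_
    field_simp

lemma sk_hasDerivAt2 {c : ℝ} (hc : 0 ≤ c) (t : ℝ) :
    HasDerivAt (fun u => Real.cosh (Real.sqrt c * u)) (c * sk (-c) t) t := by
  have h1 : HasDerivAt (fun u : ℝ => Real.sqrt c * u) (Real.sqrt c) t := by
    simpa using (hasDerivAt_id t).const_mul (Real.sqrt c)
  have h2 := h1.cosh
  convert h2 using 1
  rw [sk_neg_eq hc]
  rcases eq_or_lt_of_le hc with h | h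
  · rw [if_pos h.symm, ← h]; simp
  · have hs : Real.sqrt c ≠ 0 := (Real.sqrt_pos.2 h).ne'
    rw [if_neg h.ne']
    field_simp
    linear_combination (-Real.sinh (Real.sqrt c * t)) * (Real.mul_self_sqrt hc)

/-- Jacobi field norm comparison: if `⟨Y'', Y⟩ ≥ c|Y|²` then `|Y|/s_{−c}` is
non-decreasing. -/
theorem stmt_12 (n : ℕ) (c T : ℝ) (hc : 0 ≤ c) (hT : 0 < T)
    (Y : ℝ → EuclideanSpace ℝ (Fin n))
    (hY_C2 : ContDiffOn ℝ 2 Y (Set.Ico 0 T))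
    (hY0 : Y 0 = 0) (hYne : ∀ t ∈ Set.Ioo 0 T, Y t ≠ 0)
    (hineq : ∀ t ∈ Set.Ioo 0 T,
      c * ‖Y t‖ ^ 2 ≤ inner ℝ (deriv (deriv Y) t) (Y t)) :
    MonotoneOn (fun t => ‖Y t‖ / sk (-c) t) (Set.Ioo 0 T) := by
  have hIoo : Set.Ioo (0:ℝ) T ⊆ Set.Ico 0 T := Set.Ioo_subset_Ico_self
  have hopen : IsOpen (Set.Ioo (0:ℝ) T) := isOpen_Ioo
  have hC2 : ContDiffOn ℝ 2 Y (Set.Ioo 0 T) := hY_C2.mono hIoo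
  have hYd : ∀ t ∈ Set.Ioo 0 T, HasDerivAt Y (deriv Y t) t := fun t ht =>
    ((hC2.differentiableOn (by norm_num) t ht).differentiableAt (hopen.mem_nhds ht)).hasDerivAt
  have hC1 : ContDiffOn ℝ 1 (deriv Y) (Set.Ioo 0 T) :=
    hC2.deriv_of_isOpen hopen (by norm_num)
  have hYd2 : ∀ t ∈ Set.Ioo 0 T, HasDerivAt (deriv Y) (deriv (deriv Y) t) t := fun t ht =>
    ((hC1.differentiableOn (by norm_num) t ht).differentiableAt (hopen.mem_nhds ht)).hasDerivAt
  set f : ℝ → ℝ := fun t => ‖Y t‖ with hf_def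
  set B : ℝ → ℝ := fun t => (inner ℝ (deriv Y t) (Y t) : ℝ) with hB_def
  set A : ℝ → ℝ := fun t => (inner ℝ (deriv (deriv Y) t) (Y t) : ℝ) + ‖deriv Y t‖ ^ 2 with hA_def
  have hfpos : ∀ t ∈ Set.Ioo 0 T, 0 < f t := fun t ht => norm_pos_iff.2 (hYne t ht)
  -- derivative of f
  have hfD : ∀ t ∈ Set.Ioo 0 T, HasDerivAt f (B t / f t) t := by
    intro t ht
    have hφ : HasDerivAt (fun u => (inner ℝ (Y u) (Y u) : ℝ)) (2 * B t) t := by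
      have h := (hYd t ht).inner ℝ (hYd t ht)
      refine h.congr_deriv ?_
      rw [hB_def]
      simp only [real_inner_comm (Y t) (deriv Y t)]
      ring
    have hφt : (inner ℝ (Y t) (Y t) : ℝ) ≠ 0 := by
      rw [real_inner_self_eq_norm_sq]
      exact (pow_pos (hfpos t ht) 2).ne'
    have hsq := (Real.hasDerivAt_sqrt hφt).comp t hφ
    have heq : (fun u => Real.sqrt (inner ℝ (Y u) (Y u) : ℝ)) = f := by
      funext u
      rw [hf_def]
      rw [real_inner_self_eq_norm_sq, Real.sqrt_sq (norm_nonneg _)]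
    rw [show ((Real.sqrt ·) ∘ fun u => (inner ℝ (Y u) (Y u) : ℝ)) = f from heq] at hsq
    refine hsq.congr_deriv ?_
    rw [real_inner_self_eq_norm_sq, Real.sqrt_sq (norm_nonneg _)]
    have := (hfpos t ht).ne'
    field_simp
    exact mul_inv_cancel_right₀ this (B t)
  -- derivative of B
  have hBD : ∀ t ∈ Set.Ioo 0 T, HasDerivAt B (A t) t := by
    intro t ht
    have h := (hYd2 t ht).inner ℝ (hYd t ht)
    refine h.congr_deriv ?_
    have hAt : A t = (inner ℝ (deriv (deriv Y) t) (Y t) : ℝ) + ‖deriv Y t‖ ^ 2 := rfl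
    rw [hAt, ← real_inner_self_eq_norm_sq]
    ring
  -- s facts
  have hsD : ∀ u : ℝ, HasDerivAt (sk (-c)) (Real.cosh (Real.sqrt c * u)) u := sk_hasDerivAt hc
  have hs'D : ∀ u : ℝ, HasDerivAt (fun v => Real.cosh (Real.sqrt c * v)) (c * sk (-c) u) u :=
    sk_hasDerivAt2 hc
  have hspos : ∀ t ∈ Set.Ioo 0 T, 0 < sk (-c) t := fun t ht => sk_pos hc ht.1
  -- key inequality on the derivative of B/f
  have hkey : ∀ t ∈ Set.Ioo 0 T,
      c * f t ≤ (A t * f t - B t * (B t / f t)) / f t ^ 2 := by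
    intro t ht
    have hf0 := hfpos t ht
    have hCS : B t ^ 2 ≤ ‖deriv Y t‖ ^ 2 * f t ^ 2 := by
      have h := abs_real_inner_le_norm (deriv Y t) (Y t)
      have h2 : |B t| ≤ ‖deriv Y t‖ * f t := h
      calc B t ^ 2 = |B t| ^ 2 := (sq_abs _).symm
        _ ≤ (‖deriv Y t‖ * f t) ^ 2 := by
            exact pow_le_pow_left₀ (abs_nonneg _) h2 2
        _ = ‖deriv Y t‖ ^ 2 * f t ^ 2 := by ring
    have hA' : c * f t ^ 2 ≤ (inner ℝ (deriv (deriv Y) t) (Y t) : ℝ) := hineq t ht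
    rw [le_div_iff₀ (by positivity)]
    have hBu : B t * (B t / f t) = B t ^ 2 / f t := by
      field_simp
    have hB2f : B t ^ 2 / f t ≤ ‖deriv Y t‖ ^ 2 * f t := by
      rw [div_le_iff₀ hf0]
      nlinarith [hCS]
    have h3 := mul_le_mul_of_nonneg_right hA' hf0.le
    rw [hBu, hA_def]
    nlinarith [hB2f, h3]
  -- the Wronskian-type function
  set W : ℝ → ℝ := fun t => (B t / f t) * sk (-c) t - f t * Real.cosh (Real.sqrt c * t)
    with hW_def
  have hWD : ∀ t ∈ Set.Ioo 0 T, HasDerivAt W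
      ((A t * f t - B t * (B t / f t)) / f t ^ 2 * sk (-c) t
        + (B t / f t) * Real.cosh (Real.sqrt c * t)
        - ((B t / f t) * Real.cosh (Real.sqrt c * t) + f t * (c * sk (-c) t))) t :=
    fun t ht => (((hBD t ht).div (hfD t ht) (hfpos t ht).ne').mul (hsD t)).sub
      ((hfD t ht).mul (hs'D t))
  have hWmono : MonotoneOn W (Set.Ioo 0 T) := by
    apply monotoneOn_of_deriv_nonneg (convex_Ioo 0 T)
    · exact fun t ht => (hWD t ht).continuousAt.continuousWithinAt
    · rw [hopen.interior_eq]
      exact fun t ht => (hWD t ht).differentiableAt.differentiableWithinAt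
    · rw [hopen.interior_eq]
      intro t ht
      rw [(hWD t ht).deriv]
      have h1 := hkey t ht
      have h2 := hspos t ht
      have h4 := mul_le_mul_of_nonneg_right h1 h2.le
      linarith [h4]
  -- derivWithin and its continuity up to 0
  set dW : ℝ → EuclideanSpace ℝ (Fin n) := fun t => derivWithin Y (Set.Ico 0 T) t with hdW_def
  have hdWc : ContinuousOn dW (Set.Ico 0 T) :=
    hY_C2.continuousOn_derivWithin (uniqueDiffOn_Ico 0 T) (by norm_num)
  have hdWeq : ∀ t ∈ Set.Ioo 0 T, dW t = deriv Y t := by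
    intro t ht
    rw [hdW_def]
    exact derivWithin_of_mem_nhds (mem_nhds_iff.2 ⟨Set.Ioo 0 T, hIoo, hopen, ht⟩)
  -- the limit filter
  have h0cl : (0:ℝ) ∈ closure (Set.Ioo 0 T) := by
    rw [closure_Ioo hT.ne]
    exact ⟨le_refl 0, hT.le⟩
  haveI hne : (𝓝[Set.Ioo 0 T] (0:ℝ)).NeBot := mem_closure_iff_nhdsWithin_neBot.1 h0cl
  have hfT : Filter.Tendsto f (𝓝[Set.Ioo 0 T] 0) (𝓝 0) := by
    have h1 : ContinuousWithinAt Y (Set.Ico 0 T) 0 :=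
      hY_C2.continuousOn 0 ⟨le_refl 0, hT⟩
    have h2 := (h1.mono hIoo).tendsto
    rw [hY0] at h2
    simpa using h2.norm
  have hdWT : Filter.Tendsto (fun t => ‖dW t‖) (𝓝[Set.Ioo 0 T] 0) (𝓝 ‖dW 0‖) := by
    have h1 : ContinuousWithinAt dW (Set.Ico 0 T) 0 := hdWc 0 ⟨le_refl 0, hT⟩
    exact ((h1.mono hIoo).tendsto).norm
  have hsT : Filter.Tendsto (sk (-c)) (𝓝[Set.Ioo 0 T] 0) (𝓝 0) := by
    have := ((hsD 0).continuousAt.tendsto).mono_left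
      (nhdsWithin_le_nhds (s := Set.Ioo 0 T) (a := (0:ℝ)))
    rwa [sk_zero hc] at this
  have hs'T : Filter.Tendsto (fun t => Real.cosh (Real.sqrt c * t)) (𝓝[Set.Ioo 0 T] 0) (𝓝 1) := by
    have := ((hs'D 0).continuousAt.tendsto).mono_left
      (nhdsWithin_le_nhds (s := Set.Ioo 0 T) (a := (0:ℝ)))
    simpa using this
  have hWbound : ∀ t ∈ Set.Ioo 0 T,
      ‖W t‖ ≤ ‖dW t‖ * sk (-c) t + f t * Real.cosh (Real.sqrt c * t) := by
    intro t ht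
    have hf0 := hfpos t ht
    have hg1 : |B t / f t| ≤ ‖dW t‖ := by
      rw [abs_div, abs_of_pos hf0, div_le_iff₀ hf0, hdWeq t ht]
      exact abs_real_inner_le_norm _ _
    have hsnn := (hspos t ht).le
    have hch : (0:ℝ) ≤ Real.cosh (Real.sqrt c * t) := (Real.cosh_pos _).le
    rw [hW_def, Real.norm_eq_abs]
    calc |B t / f t * sk (-c) t - f t * Real.cosh (Real.sqrt c * t)|
        ≤ |B t / f t * sk (-c) t| + |f t * Real.cosh (Real.sqrt c * t)| := abs_sub _ _
      _ = |B t / f t| * sk (-c) t + f t * Real.cosh (Real.sqrt c * t) := by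
          rw [abs_mul, abs_mul, abs_of_nonneg hsnn, abs_of_pos hf0, abs_of_nonneg hch]
      _ ≤ ‖dW t‖ * sk (-c) t + f t * Real.cosh (Real.sqrt c * t) := by
          have := mul_le_mul_of_nonneg_right hg1 hsnn
          linarith
  have hW0 : Filter.Tendsto W (𝓝[Set.Ioo 0 T] 0) (𝓝 0) := by
    apply squeeze_zero_norm' (Filter.eventually_of_mem self_mem_nhdsWithin hWbound)
    have := (hdWT.mul hsT).add (hfT.mul hs'T)
    simpa using this
  have hWnonneg : ∀ t ∈ Set.Ioo 0 T, 0 ≤ W t := by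
    intro t ht
    refine le_of_tendsto hW0 ?_
    have hlt : ∀ᶠ u in 𝓝[Set.Ioo 0 T] (0:ℝ), u < t :=
      (eventually_lt_nhds ht.1).filter_mono nhdsWithin_le_nhds
    filter_upwards [self_mem_nhdsWithin, hlt] with u hu hu2
    exact hWmono hu ht hu2.le
  -- conclusion
  apply monotoneOn_of_deriv_nonneg (convex_Ioo 0 T)
  · intro t ht
    exact ((hfD t ht).div (hsD t) (hspos t ht).ne').continuousAt.continuousWithinAt
  · rw [hopen.interior_eq]
    intro t ht
    exact ((hfD t ht).div (hsD t) (hspos t ht).ne').differentiableAt.differentiableWithinAt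
  · rw [hopen.interior_eq]
    intro t ht
    rw [show (fun t => ‖Y t‖ / sk (-c) t) = f / sk (-c) from rfl, ((hfD t ht).div (hsD t) (hspos t ht).ne').deriv]
    exact div_nonneg (hWnonneg t ht) (sq_nonneg _)
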